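/- Let G be a graph and (T,χ) a lenient tree decomposition of G. Then the (T,χ)-completion G⁺ of G is a chordal graph. -/

import Mathlib

open SimpleGraph

section Defs

variable {V W : Type}

/-- `X` covers the family `B`: every member of `B` meets `X`. -/
def Covers (X : Set V) (B : Set (Set V)) : Prop := ∀ S ∈ B, (S ∩ X).Nonempty

/-- A strict bramble: a family of connected vertex sets, pairwise intersecting. -/
def IsStrictBramble (G : SimpleGraph V) (B : Set (Set V)) : Prop :=
  (∀ S ∈ B, (G.induce S).Connected) ∧ ∀ S ∈ B, ∀ S' ∈ B, (S ∩ S').Nonempty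

/-- Two vertex sets touch: they intersect or are joined by an edge. -/
def Touches (G : SimpleGraph V) (S S' : Set V) : Prop :=
  (S ∩ S').Nonempty ∨ ∃ u ∈ S, ∃ v ∈ S', G.Adj u v

/-- A bramble: a family of connected vertex sets, pairwise touching. -/
def IsBramble (G : SimpleGraph V) (B : Set (Set V)) : Prop :=
  (∀ S ∈ B, (G.induce S).Connected) ∧ ∀ S ∈ B, ∀ S' ∈ B, Touches G S S'

/-- The order of a family of vertex sets: minimum size of a covering set. -/
noncomputable def brOrder (B : Set (Set V)) : ℕ :=
  sInf {n | ∃ X : Set V, Covers X B ∧ X.ncard = n}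

/-- The strict bramble number. -/
noncomputable def sbn (G : SimpleGraph V) : ℕ :=
  sSup {n | ∃ B, IsStrictBramble G B ∧ brOrder B = n}

/-- The bramble number. -/
noncomputable def bn (G : SimpleGraph V) : ℕ :=
  sSup {n | ∃ B, IsBramble G B ∧ brOrder B = n}

/-- `S` is an `(x,y)`-separator: `x, y ∉ S` and `x, y` lie in different
components of `G − S`. -/
def SepPair (G : SimpleGraph V) (x y : V) (S : Set V) : Prop :=
  x ∉ S ∧ y ∉ S ∧ ∀ (hx : x ∈ Sᶜ) (hy : y ∈ Sᶜ),
    ¬ (G.induce Sᶜ).Reachable ⟨x, hx⟩ ⟨y, hy⟩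

/-- `S` is an `(X,Y)`-separator of `G`. -/
def IsSetSeparator (G : SimpleGraph V) (X Y S : Set V) : Prop :=
  ∀ x ∈ X \ S, ∀ y ∈ Y \ S, SepPair G x y S

/-- A lenient tree decomposition of `G`. -/
structure LenientTD (G : SimpleGraph V) where
  ι : Type
  T : SimpleGraph ι
  tree : T.IsTree
  χ : ι → Set V
  covers : ∀ v : V, ∃ t, v ∈ χ t
  edge_mem : ∀ u v : V, G.Adj u v →
    ∃ t t', (t = t' ∨ T.Adj t t') ∧ u ∈ χ t ∪ χ t' ∧ v ∈ χ t ∪ χ t'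
  trace_conn : ∀ v : V, (T.induce {t | v ∈ χ t}).Connected

/-- The width of a lenient tree decomposition is at most `k`. -/
def LenientTD.WidthLE {G : SimpleGraph V} (D : LenientTD G) (k : ℕ) : Prop :=
  ∀ t, (D.χ t).ncard ≤ k

/-- An ordinary tree decomposition of `G`. -/
structure TreeDecomp (G : SimpleGraph V) where
  ι : Type
  T : SimpleGraph ι
  tree : T.IsTree
  χ : ι → Set V
  covers : ∀ v : V, ∃ t, v ∈ χ t
  edge_mem : ∀ u v : V, G.Adj u v → ∃ t, u ∈ χ t ∧ v ∈ χ t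
  trace_conn : ∀ v : V, (T.induce {t | v ∈ χ t}).Connected

/-- Treewidth: minimum over tree decompositions of (max bag size − 1). -/
noncomputable def tw (G : SimpleGraph V) : ℕ :=
  sInf {k | ∃ D : TreeDecomp G, ∀ t, (D.χ t).ncard ≤ k + 1}

/-- A minor model of `H` in `G`. -/
def IsMinorModel (H : SimpleGraph W) (G : SimpleGraph V) (μ : W → Set V) : Prop :=
  (∀ w, (G.induce (μ w)).Connected) ∧
  (∀ w w', w ≠ w' → μ w ∩ μ w' = ∅) ∧
  (∀ w w', H.Adj w w' → ∃ u ∈ μ w, ∃ v ∈ μ w', G.Adj u v)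

/-- `H` is a minor of `G`. -/
def IsMinorOf (H : SimpleGraph W) (G : SimpleGraph V) : Prop :=
  ∃ μ : W → Set V, IsMinorModel H G μ

/-- The lexicographic product `T · K_k`. -/
def lexK {ι : Type} (T : SimpleGraph ι) (k : ℕ) : SimpleGraph (ι × Fin k) where
  Adj a b := T.Adj a.1 b.1 ∨ (a.1 = b.1 ∧ a.2 ≠ b.2)
  symm := by
    constructor
    rintro a b (h | ⟨h1, h2⟩)
    · exact Or.inl h.symm
    · exact Or.inr ⟨h1.symm, h2.symm⟩
  loopless := by
    constructor
    rintro a (h | ⟨_, h2⟩)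
    · exact T.irrefl h
    · exact h2 rfl

/-- The lexicographic tree product number. -/
noncomputable def ltp (G : SimpleGraph V) : ℕ :=
  sInf {m | ∃ (ι : Type) (T : SimpleGraph ι), T.IsTree ∧ IsMinorOf G (lexK T m)}

/-- The `(T,χ)`-completion of `G`: make each union of two close bags a clique. -/
def LenientTD.completion {G : SimpleGraph V} (D : LenientTD G) : SimpleGraph V where
  Adj u v := u ≠ v ∧ ∃ t t', (t = t' ∨ D.T.Adj t t') ∧
    u ∈ D.χ t ∪ D.χ t' ∧ v ∈ D.χ t ∪ D.χ t'
  symm := by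
    constructor
    rintro u v ⟨hne, t, t', hc, hu, hv⟩
    exact ⟨hne.symm, t, t', hc, hv, hu⟩
  loopless := ⟨fun u h => h.1 rfl⟩

/-- `G` is chordal: every cycle of length at least four has a chord. -/
def IsChordal (G : SimpleGraph V) : Prop :=
  ∀ (v : V) (w : G.Walk v v), w.IsCycle → 4 ≤ w.length →
    ∃ x ∈ w.support, ∃ y ∈ w.support, G.Adj x y ∧ s(x, y) ∉ w.edges

end Defs

section ChordalAux

open SimpleGraph Walk

variable {ι : Type} {T : SimpleGraph ι}

/-! ### Basic walk index lemmas -/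

lemma support_getElem_eq_getVert {u v : ι} (p : T.Walk u v) {i : ℕ}
    (h : i < p.support.length) : p.support[i] = p.getVert i := by
  induction p generalizing i with
  | nil =>
    simp only [Walk.support_nil, List.length_singleton] at h
    interval_cases i
    simp [Walk.getVert_zero]
  | cons ha p ih =>
    rcases i with _ | i
    · simp [Walk.getVert_zero]
    · simp only [Walk.support_cons, List.getElem_cons_succ, Walk.getVert_cons_succ]
      apply ih

lemma cycle_getVert_inj {x : ι} {w : T.Walk x x} (hw : w.IsCycle) {i j : ℕ}
    (hi1 : 1 ≤ i) (hi2 : i ≤ w.length) (hj1 : 1 ≤ j) (hj2 : j ≤ w.length)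
    (heq : w.getVert i = w.getVert j) : i = j := by
  have hnd := hw.support_nodup
  have hlen : w.support.length = w.length + 1 := w.length_support
  have htl : w.support.tail.length = w.length := by
    rw [List.length_tail]
    omega
  have key : ∀ k : ℕ, 1 ≤ k → k ≤ w.length → ∀ (hb : k - 1 < w.support.tail.length),
      w.support.tail[k-1]'hb = w.getVert k := by
    intro k hk1 hk2 hb
    have h1 := List.get_tail w.support (k-1) (by omega) (by omega)
    simp only [List.get_eq_getElem] at h1
    rw [h1, _root_.support_getElem_eq_getVert w (by omega)]
    congr 1
    omega
  have e1 := key i hi1 hi2 (by omega)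
  have e2 := key j hj1 hj2 (by omega)
  have heq2 : w.support.tail[i-1]'(by omega) = w.support.tail[j-1]'(by omega) := by
    rw [e1, e2, heq]
  have := hnd.getElem_inj_iff.mp heq2
  omega

lemma length_rotate' [DecidableEq ι] {x u : ι} (w : T.Walk x x) (h : u ∈ w.support) :
    (w.rotate u h).length = w.length := by
  have hspec := congrArg Walk.length (w.take_spec h)
  rw [Walk.length_append] at hspec
  show ((w.dropUntil u h).append (w.takeUntil u h)).length = w.length
  rw [Walk.length_append]
  omega

/-! ### Unique paths in trees -/

noncomputable def thePath (hT : T.IsTree) (r c : ι) : T.Walk r c :=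
  (hT.existsUnique_path r c).choose

lemma thePath_isPath (hT : T.IsTree) (r c : ι) : (thePath hT r c).IsPath :=
  (hT.existsUnique_path r c).choose_spec.1

lemma thePath_unique (hT : T.IsTree) {r c : ι} (p : T.Walk r c) (hp : p.IsPath) :
    p = thePath hT r c :=
  (hT.existsUnique_path r c).choose_spec.2 p hp

lemma length_thePath (hT : T.IsTree) (r c : ι) : (thePath hT r c).length = T.dist r c := by
  classical
  obtain ⟨W, hW⟩ := (hT.isConnected.preconnected r c).exists_walk_length_eq_dist
  have h1 : W.bypass = thePath hT r c := thePath_unique hT _ W.bypass_isPath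
  have h2 : (thePath hT r c).length ≤ T.dist r c := by
    rw [← h1, ← hW]; exact W.length_bypass_le
  exact le_antisymm h2 (SimpleGraph.dist_le _)

lemma dist_le_of_mem_thePath (hT : T.IsTree) {r a c : ι}
    (h : a ∈ (thePath hT r c).support) : T.dist r a ≤ T.dist r c := by
  classical
  have hlen := congrArg Walk.length ((thePath hT r c).take_spec h)
  rw [Walk.length_append] at hlen
  have h1 : T.dist r a ≤ ((thePath hT r c).takeUntil a h).length := SimpleGraph.dist_le _
  have h2 := length_thePath hT r c
  omega

lemma dist_lt_of_mem_thePath (hT : T.IsTree) {r a c : ι} (hne : a ≠ c)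
    (h : a ∈ (thePath hT r c).support) : T.dist r a < T.dist r c := by
  classical
  have hlen := congrArg Walk.length ((thePath hT r c).take_spec h)
  rw [Walk.length_append] at hlen
  have hd : ((thePath hT r c).dropUntil a h).length ≠ 0 :=
    fun h0 => hne (Walk.eq_of_length_eq_zero h0)
  have h1 : T.dist r a ≤ ((thePath hT r c).takeUntil a h).length := SimpleGraph.dist_le _
  have h2 := length_thePath hT r c
  omega

lemma thePath_concat (hT : T.IsTree) {r q a : ι} (h : T.Adj q a)
    (hd : T.dist r q + 1 = T.dist r a) :
    thePath hT r a = (thePath hT r q).concat h := by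
  have hna : a ∉ (thePath hT r q).support := by
    intro hmem
    have hne : a ≠ q := by rintro rfl; omega
    have := dist_lt_of_mem_thePath hT hne hmem
    omega
  have hp : ((thePath hT r q).concat h).IsPath := by
    rw [← Walk.isPath_reverse_iff, Walk.reverse_concat]
    exact ((thePath_isPath hT r q).reverse).cons
      (by rw [Walk.support_reverse]; simpa using hna)
  exact (thePath_unique hT _ hp).symm

lemma adj_dist_tree (hT : T.IsTree) (r : ι) {c c' : ι} (h : T.Adj c c') :
    T.dist r c' = T.dist r c + 1 ∨ T.dist r c = T.dist r c' + 1 := by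
  have h1 : T.dist r c' ≤ T.dist r c + 1 := by
    have := SimpleGraph.dist_le ((thePath hT r c).concat h)
    rwa [Walk.length_concat, length_thePath] at this
  have h2 : T.dist r c ≤ T.dist r c' + 1 := by
    have := SimpleGraph.dist_le ((thePath hT r c').concat h.symm)
    rwa [Walk.length_concat, length_thePath] at this
  have hne : T.dist r c ≠ T.dist r c' := by
    intro heq
    by_cases hc : c ∈ (thePath hT r c').support
    · have := dist_lt_of_mem_thePath hT h.ne hc; omega
    · have hp : ((thePath hT r c').concat h.symm).IsPath := by
        rw [← Walk.isPath_reverse_iff, Walk.reverse_concat]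
        exact ((thePath_isPath hT r c').reverse).cons
          (by rw [Walk.support_reverse]; simpa using hc)
      have he := thePath_unique hT _ hp
      have hl := congrArg Walk.length he
      rw [Walk.length_concat, length_thePath, length_thePath] at hl
      omega
  omega

lemma mem_thePath_adj (hT : T.IsTree) {r a c c' : ι}
    (hanc : a ∈ (thePath hT r c).support) (h : T.Adj c c') (hne : a ≠ c) :
    a ∈ (thePath hT r c').support := by
  rcases adj_dist_tree hT r h with hd | hd
  · rw [thePath_concat hT h hd.symm, Walk.support_concat]
    simp only [List.concat_eq_append, List.mem_append]
    exact Or.inl hanc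
  · rw [thePath_concat hT h.symm hd.symm, Walk.support_concat] at hanc
    simp only [List.concat_eq_append, List.mem_append, List.mem_singleton] at hanc
    rcases hanc with hanc | hanc
    · exact hanc
    · exact absurd hanc hne

lemma mem_thePath_adj' (hT : T.IsTree) {r a c c' : ι}
    (hanc : a ∈ (thePath hT r c).support) (h : T.Adj c c')
    (hda : T.dist r a ≤ T.dist r c') : a ∈ (thePath hT r c').support := by
  by_cases hne : a = c
  · subst hne
    rcases adj_dist_tree hT r h with hd | hd
    · rw [thePath_concat hT h hd.symm, Walk.support_concat]
      simp only [List.concat_eq_append, List.mem_append]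
      exact Or.inl (thePath hT r a).end_mem_support
    · have h1 := dist_le_of_mem_thePath hT hanc
      omega
  · exact mem_thePath_adj hT hanc h hne

lemma mem_thePath_of_walk_ge (hT : T.IsTree) {r a : ι} :
    ∀ {c e : ι} (W : T.Walk c e), a ∈ (thePath hT r c).support →
      (∀ t ∈ W.support, T.dist r a ≤ T.dist r t) →
      a ∈ (thePath hT r e).support := by
  intro c e W
  induction W with
  | nil => exact fun h _ => h
  | @cons c b e hadj W ih =>
    intro h hdep
    refine ih (mem_thePath_adj' hT h hadj (hdep b ?_)) (fun t ht => hdep t ?_)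
    · rw [Walk.support_cons]
      exact List.mem_cons_of_mem _ W.start_mem_support
    · rw [Walk.support_cons]
      exact List.mem_cons_of_mem _ ht

lemma mem_thePath_of_walk_avoid (hT : T.IsTree) {r a : ι} :
    ∀ {c e : ι} (W : T.Walk c e), a ∈ (thePath hT r c).support →
      a ∉ W.support → a ∈ (thePath hT r e).support := by
  intro c e W
  induction W with
  | nil => exact fun h _ => h
  | @cons c b e hadj W ih =>
    intro h hav
    rw [Walk.support_cons, List.mem_cons] at hav
    push_neg at hav
    exact ih (mem_thePath_adj hT h hadj hav.1) hav.2

lemma mem_walk_of_anc (hT : T.IsTree) {r a s' b : ι} (W : T.Walk s' b)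
    (hanc : a ∈ (thePath hT r s').support) (hb : T.dist r b ≤ T.dist r a) :
    a ∈ W.support := by
  by_contra hav
  have h2 := mem_thePath_of_walk_avoid hT W hanc hav
  have hne : a ≠ b := fun h => hav (h ▸ W.end_mem_support)
  have := dist_lt_of_mem_thePath hT hne h2
  omega

lemma parent_unique (hT : T.IsTree) {r a q q' : ι} (h : T.Adj q a) (h' : T.Adj q' a)
    (hd : T.dist r q + 1 = T.dist r a) (hd' : T.dist r q' + 1 = T.dist r a) : q = q' := by
  have e1 := thePath_concat hT h hd
  have e2 := thePath_concat hT h' hd'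
  obtain ⟨hv, -⟩ := Walk.concat_inj (e1.symm.trans e2)
  exact hv

/-! ### Lemmas about lenient tree decompositions -/

variable {V : Type} {G : SimpleGraph V}

lemma exists_walk_in_bags (D : LenientTD G) (u : V) {t1 t2 : D.ι}
    (h1 : u ∈ D.χ t1) (h2 : u ∈ D.χ t2) :
    ∃ W : D.T.Walk t1 t2, ∀ c ∈ W.support, u ∈ D.χ c := by
  obtain ⟨W0⟩ := (D.trace_conn u).preconnected ⟨t1, h1⟩ ⟨t2, h2⟩
  refine ⟨W0.map (SimpleGraph.Embedding.induce _).toHom, ?_⟩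
  intro c hc
  have hc2 : c ∈ W0.support.map (SimpleGraph.Embedding.induce (G := D.T) {t | u ∈ D.χ t}).toHom := by
    rw [← Walk.support_map]; exact hc
  obtain ⟨⟨c', hc'⟩, -, rfl⟩ := List.mem_map.mp hc2
  exact hc'

lemma touching_of_adj (D : LenientTD G) {u v : V} (h : D.completion.Adj u v) :
    ∃ s s', u ∈ D.χ s ∧ v ∈ D.χ s' ∧ (s = s' ∨ D.T.Adj s s') := by
  replace h : u ≠ v ∧ ∃ t t', (t = t' ∨ D.T.Adj t t') ∧ u ∈ D.χ t ∪ D.χ t' ∧ v ∈ D.χ t ∪ D.χ t' := h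
  obtain ⟨-, t, t', hc, hu, hv⟩ := h
  rcases hu with hu | hu <;> rcases hv with hv | hv
  · exact ⟨t, t, hu, hv, Or.inl rfl⟩
  · exact ⟨t, t', hu, hv, hc⟩
  · refine ⟨t', t, hu, hv, ?_⟩
    rcases hc with h1 | h1
    · exact Or.inl h1.symm
    · exact Or.inr h1.symm
  · exact ⟨t', t', hu, hv, Or.inl rfl⟩

lemma key_lemma (D : LenientTD G) (r : D.ι) {a : D.ι} {x u : V}
    (hax : x ∈ D.χ a) (hmin : ∀ t, x ∈ D.χ t → D.T.dist r a ≤ D.T.dist r t)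
    {b : D.ι} (hbu : u ∈ D.χ b) (hba : D.T.dist r b ≤ D.T.dist r a)
    {s s' : D.ι} (hsx : x ∈ D.χ s) (hsu : u ∈ D.χ s') (hss : s = s' ∨ D.T.Adj s s') :
    ∃ q, u ∈ D.χ q ∧ (q = a ∨ (D.T.Adj q a ∧ D.T.dist r q + 1 = D.T.dist r a)) := by
  have hT := D.tree
  obtain ⟨Wx, hWx⟩ := exists_walk_in_bags D x hax hsx
  have hancs : a ∈ (thePath hT r s).support :=
    mem_thePath_of_walk_ge hT Wx (thePath hT r a).end_mem_support
      (fun t ht => hmin t (hWx t ht))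
  have hfromanc : a ∈ (thePath hT r s').support →
      ∃ q, u ∈ D.χ q ∧ (q = a ∨ (D.T.Adj q a ∧ D.T.dist r q + 1 = D.T.dist r a)) := by
    intro hanc
    obtain ⟨Wu, hWu⟩ := exists_walk_in_bags D u hsu hbu
    have hmem := mem_walk_of_anc hT Wu hanc hba
    exact ⟨a, hWu a hmem, Or.inl rfl⟩
  rcases hss with rfl | hadj
  · exact hfromanc hancs
  · rcases le_or_gt (D.T.dist r a) (D.T.dist r s') with hle | hgt
    · exact hfromanc (mem_thePath_adj' hT hancs hadj hle)
    · have h1 : D.T.dist r a ≤ D.T.dist r s := dist_le_of_mem_thePath hT hancs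
      rcases adj_dist_tree hT r hadj with hd | hd
      · omega
      · have has : a = s := by
          by_contra hne
          have := dist_lt_of_mem_thePath hT hne hancs
          omega
        subst has
        exact ⟨s', hsu, Or.inr ⟨hadj.symm, by omega⟩⟩

end ChordalAux

/-- the `(T,χ)`-completion of `G` is chordal. -/
theorem completion_isChordal {V : Type} [Fintype V] (G : SimpleGraph V)
    (D : LenientTD G) : IsChordal D.completion := by
  classical
  intro v w hw hlen
  -- root of the tree
  obtain ⟨r, -⟩ := D.covers v
  set d : D.ι → ℕ := fun t => D.T.dist r t with hd_def
  set m : V → ℕ := fun u => sInf {k | ∃ t, u ∈ D.χ t ∧ d t = k} with hm_def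
  have hattain : ∀ u : V, ∃ t, u ∈ D.χ t ∧ d t = m u := by
    intro u
    obtain ⟨t0, ht0⟩ := D.covers u
    have hne : {k | ∃ t, u ∈ D.χ t ∧ d t = k}.Nonempty := ⟨d t0, t0, ht0, rfl⟩
    exact Nat.sInf_mem hne
  have hlb : ∀ (u : V) (t : D.ι), u ∈ D.χ t → m u ≤ d t :=
    fun u t ht => Nat.sInf_le ⟨t, ht, rfl⟩
  -- pick a vertex of the cycle with maximal m
  obtain ⟨x, hxmem, hxmax⟩ := Finset.exists_max_image w.support.toFinset m
    ⟨v, List.mem_toFinset.mpr w.start_mem_support⟩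
  have hxsup : x ∈ w.support := List.mem_toFinset.mp hxmem
  -- rotate the cycle to start at x
  set w' : D.completion.Walk x x := w.rotate x hxsup with hw'_def
  have hw'cyc : w'.IsCycle := hw.rotate hxsup
  have hlen' : w'.length = w.length := length_rotate' w hxsup
  set n := w'.length with hn_def
  have hn4 : 4 ≤ n := by omega
  set y := w'.getVert 1 with hy_def
  set z := w'.getVert (n - 1) with hz_def
  -- membership of y, z in the support of w
  have hytl : y ∈ w'.support.tail := by
    have h0 : w'.support.tail[0]'(by rw [List.length_tail, w'.length_support]; omega) =
        w'.support[1]'(by rw [w'.length_support]; omega) := List.get_tail _ _ _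
    rw [support_getElem_eq_getVert] at h0
    rw [hy_def, ← h0]
    exact List.getElem_mem _
  have hztl : z ∈ w'.support.tail := by
    have h0 : w'.support.tail[n-2]'(by rw [List.length_tail, w'.length_support]; omega) =
        w'.support[n-2+1]'(by rw [w'.length_support]; omega) := List.get_tail _ _ _
    rw [support_getElem_eq_getVert] at h0
    have he : n - 2 + 1 = n - 1 := by omega
    rw [he] at h0
    rw [hz_def, ← h0]
    exact List.getElem_mem _
  have hperm := w.support_rotate x hxsup
  have hysup : y ∈ w.support := List.mem_of_mem_tail (hperm.perm.mem_iff.mp hytl)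
  have hzsup : z ∈ w.support := List.mem_of_mem_tail (hperm.perm.mem_iff.mp hztl)
  -- adjacency of x with y and z in the completion
  have hadjxy : D.completion.Adj x y := by
    have := w'.adj_getVert_succ (i := 0) (by omega)
    rwa [Walk.getVert_zero] at this
  have hadjzx : D.completion.Adj z x := by
    have := w'.adj_getVert_succ (i := n - 1) (by omega)
    have he : n - 1 + 1 = n := by omega
    rw [he] at this
    have he2 : w'.getVert n = x := w'.getVert_length
    rwa [he2] at this
  have hxy : x ≠ y := hadjxy.ne
  have hxz : x ≠ z := hadjzx.ne'
  have hyz : y ≠ z := by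
    intro he
    have := cycle_getVert_inj hw'cyc (i := 1) (j := n - 1)
      le_rfl (by omega) (by omega) (by omega) he
    omega
  -- apply the key lemma to both neighbours
  obtain ⟨a, hax, hda⟩ := hattain x
  have hmin : ∀ t, x ∈ D.χ t → D.T.dist r a ≤ D.T.dist r t := by
    intro t ht
    have := hlb x t ht
    exact le_trans (le_of_eq hda) this
  have hmy : m y ≤ m x := hxmax y (List.mem_toFinset.mpr hysup)
  have hmz : m z ≤ m x := hxmax z (List.mem_toFinset.mpr hzsup)
  obtain ⟨by_, hby, hdby⟩ := hattain y
  obtain ⟨bz_, hbz, hdbz⟩ := hattain z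
  obtain ⟨s1, s1', hs1x, hs1y, hss1⟩ := touching_of_adj D hadjxy
  obtain ⟨s2, s2', hs2z, hs2x, hss2⟩ := touching_of_adj D hadjzx
  have hss2' : s2' = s2 ∨ D.T.Adj s2' s2 := by
    rcases hss2 with h1 | h1
    · exact Or.inl h1.symm
    · exact Or.inr h1.symm
  have hqy := key_lemma D r hax hmin hby (show d by_ ≤ d a by omega) hs1x hs1y hss1
  have hqz := key_lemma D r hax hmin hbz (show d bz_ ≤ d a by omega) hs2x hs2z hss2'
  obtain ⟨qy, hqy1, hqy2⟩ := hqy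
  obtain ⟨qz, hqz1, hqz2⟩ := hqz
  -- y and z are adjacent in the completion
  have hclose : qy = qz ∨ D.T.Adj qy qz := by
    rcases hqy2 with rfl | ⟨hy1, hy2⟩
    · rcases hqz2 with rfl | ⟨hz1, hz2⟩
      · exact Or.inl rfl
      · exact Or.inr hz1.symm
    · rcases hqz2 with rfl | ⟨hz1, hz2⟩
      · exact Or.inr hy1
      · exact Or.inl (parent_unique D.tree hy1 hz1 hy2 hz2)
  have hadjyz : D.completion.Adj y z :=
    ⟨hyz, qy, qz, hclose, Set.mem_union_left _ hqy1, Set.mem_union_right _ hqz1⟩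
  -- the chord is not an edge of the cycle
  refine ⟨y, hysup, z, hzsup, hadjyz, ?_⟩
  intro hedge
  have hedge' : s(y, z) ∈ w'.edges := by
    rwa [(w.rotate_edges x hxsup).mem_iff]
  have hsub : w'.toSubgraph.Adj y z := by
    rw [← SimpleGraph.Subgraph.mem_edgeSet, Walk.mem_edges_toSubgraph]
    exact hedge'
  obtain ⟨i, hi, hilen⟩ := (Walk.toSubgraph_adj_iff _).mp hsub
  rw [Sym2.eq_iff] at hi
  rcases hi with ⟨hi1, hi2⟩ | ⟨hi1, hi2⟩
  · -- getVert i = y, getVert (i+1) = z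
    have hi0 : i ≠ 0 := by
      intro h0
      rw [h0, Walk.getVert_zero] at hi1
      exact hxy hi1
    have hieq : i = 1 := cycle_getVert_inj hw'cyc (by omega) (by omega) le_rfl (by omega)
      (by rw [hi1])
    have h2 : w'.getVert (i + 1) = w'.getVert (n - 1) := by rw [hi2]
    have := cycle_getVert_inj hw'cyc (by omega) (by omega) (by omega) (by omega) h2
    omega
  · -- getVert i = z, getVert (i+1) = y
    have h2 : w'.getVert (i + 1) = w'.getVert 1 := by rw [hi2]
    have hieq : i + 1 = 1 := cycle_getVert_inj hw'cyc (by omega) (by omega) le_rfl (by omega) h2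
    have hi0 : i = 0 := by omega
    rw [hi0, Walk.getVert_zero] at hi1
    exact hxz hi1
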